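/- Let $M\in\mathbb{R}^{n\times n}$ with $\|M\|_2 \le C$ and $\|(M|_{j\times j})^{-1}\|_2 \le 1/\gamma$ for all $1\le j\le n$, and let $M = LU$ be the normalized $LU$-factorization. Then the diagonal entries of $U$ satisfy $|U_{jj}| \le C + C^2/\gamma$ for all $j$. (Proof via the $2\times 2$ block Schur complement: $U_{jj} = M_{jj} - M_{j,1:j-1}(M|_{(j-1)\times(j-1)})^{-1} M_{1:j-1,j}$.) -/

import Mathlib

open Matrix

/-- The spectral (ℓ²-operator) norm of a real matrix. -/
noncomputable def specNorm {m n : ℕ} (M : Matrix (Fin m) (Fin n) ℝ) : ℝ :=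
  ‖LinearMap.toContinuousLinearMap (Matrix.toEuclideanLin M)‖

/-- The upper-left `j × j` principal submatrix of `M`. -/
def psub {n : ℕ} (M : Matrix (Fin n) (Fin n) ℝ) (j : ℕ) (h : j ≤ n) :
    Matrix (Fin j) (Fin j) ℝ :=
  Matrix.of fun a b => M (Fin.castLE h a) (Fin.castLE h b)

/-- `L` is lower triangular. -/
def LowerTri {n : ℕ} (L : Matrix (Fin n) (Fin n) ℝ) : Prop :=
  ∀ i j : Fin n, i < j → L i j = 0

/-- `U` is upper triangular. -/
def UpperTri {n : ℕ} (U : Matrix (Fin n) (Fin n) ℝ) : Prop :=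
  ∀ i j : Fin n, j < i → U i j = 0

noncomputable def Qn {k : ℕ} (x : Fin k → ℝ) : ℝ := Real.sqrt (∑ i, x i ^ 2)

lemma Qn_nonneg {k : ℕ} (x : Fin k → ℝ) : 0 ≤ Qn x := Real.sqrt_nonneg _

lemma Qn_eq_norm {k : ℕ} (x : Fin k → ℝ) :
    ‖(WithLp.equiv 2 (Fin k → ℝ)).symm x‖ = Qn x := by
  rw [EuclideanSpace.norm_eq]
  simp [Qn, sq_abs]

lemma abs_le_Qn {k : ℕ} (x : Fin k → ℝ) (i : Fin k) : |x i| ≤ Qn x := by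
  rw [← Real.sqrt_sq_eq_abs]
  exact Real.sqrt_le_sqrt (Finset.single_le_sum (f := fun i => x i ^ 2)
    (fun i _ => sq_nonneg _) (Finset.mem_univ i))

lemma Qn_mulVec_le {k l : ℕ} (N : Matrix (Fin k) (Fin l) ℝ) (x : Fin l → ℝ) :
    Qn (N *ᵥ x) ≤ specNorm N * Qn x := by
  have h := (LinearMap.toContinuousLinearMap (Matrix.toEuclideanLin N)).le_opNorm
    ((WithLp.equiv 2 (Fin l → ℝ)).symm x)
  rw [← Qn_eq_norm, ← Qn_eq_norm]
  simpa [Matrix.toEuclideanLin_apply_piLp_toLp, Qn_eq_norm, specNorm] using h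

lemma Qn_single {k : ℕ} (j : Fin k) : Qn (Pi.single j (1:ℝ)) = 1 := by
  simp [Qn, Pi.single_apply]

lemma entry_le_specNorm {k l : ℕ} (N : Matrix (Fin k) (Fin l) ℝ) (a : Fin k) (b : Fin l) :
    |N a b| ≤ specNorm N := by
  have h1 := abs_le_Qn (N *ᵥ Pi.single b 1) a
  have h2 := Qn_mulVec_le N (Pi.single b 1)
  rw [Qn_single, mul_one] at h2
  simp only [Matrix.mulVec_single_one, mul_one] at h1 h2
  exact h1.trans h2

lemma sum_castLE {n m : ℕ} (h : m ≤ n) (g : Fin n → ℝ)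
    (hg : ∀ k : Fin n, m ≤ k.val → g k = 0) :
    ∑ k, g k = ∑ k : Fin m, g (Fin.castLE h k) := by
  let f : ℕ → ℝ := fun i => if hi : i < n then g ⟨i, hi⟩ else 0
  have h1 : ∑ k : Fin n, g k = ∑ i ∈ Finset.range n, f i := by
    rw [← Fin.sum_univ_eq_sum_range]
    exact Finset.sum_congr rfl fun k _ => by simp [f, k.isLt]
  have h2 : ∑ k : Fin m, g (Fin.castLE h k) = ∑ i ∈ Finset.range m, f i := by
    rw [← Fin.sum_univ_eq_sum_range]
    refine Finset.sum_congr rfl fun k _ => ?_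
    have hk : (k:ℕ) < n := lt_of_lt_of_le k.isLt h
    simp only [f, dif_pos hk]
    rfl
  rw [h1, h2]
  exact (Finset.sum_subset (Finset.range_subset_range.mpr h) fun i hin him => by
    have hi : i < n := Finset.mem_range.mp hin
    simp only [f, dif_pos hi]
    exact hg ⟨i, hi⟩ (Nat.le_of_not_lt fun hc => him (Finset.mem_range.mpr hc))).symm

lemma sum_castLE_le {n m : ℕ} (h : m ≤ n) (g : Fin n → ℝ) (hg : ∀ k, 0 ≤ g k) :
    ∑ k : Fin m, g (Fin.castLE h k) ≤ ∑ k, g k := by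
  let f : ℕ → ℝ := fun i => if hi : i < n then g ⟨i, hi⟩ else 0
  have h1 : ∑ k : Fin n, g k = ∑ i ∈ Finset.range n, f i := by
    rw [← Fin.sum_univ_eq_sum_range]
    exact Finset.sum_congr rfl fun k _ => by simp [f, k.isLt]
  have h2 : ∑ k : Fin m, g (Fin.castLE h k) = ∑ i ∈ Finset.range m, f i := by
    rw [← Fin.sum_univ_eq_sum_range]
    refine Finset.sum_congr rfl fun k _ => ?_
    have hk : (k:ℕ) < n := lt_of_lt_of_le k.isLt h
    simp only [f, dif_pos hk]
    rfl
  rw [h1, h2]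
  refine Finset.sum_le_sum_of_subset_of_nonneg (Finset.range_subset_range.mpr h) fun i hin _ => ?_
  by_cases hi : i < n
  · simpa [f, hi] using hg _
  · simp [f, hi]

/-- diagonal bound via the `2×2` Schur complement: under the spectral
bounds on `M` and its principal submatrix inverses, `|U_{jj}| ≤ C + C²/γ`. -/
theorem stmt_11 (n : ℕ) (C γ : ℝ) (hC : 0 < C) (hγ : 0 < γ)
    (M L U : Matrix (Fin n) (Fin n) ℝ) (hM : specNorm M ≤ C)
    (hinv : ∀ (j : ℕ) (h : j ≤ n), 1 ≤ j →
      IsUnit (psub M j h) ∧ specNorm (psub M j h)⁻¹ ≤ 1 / γ)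
    (hL : LowerTri L) (hLdiag : ∀ i, L i i = 1) (hU : UpperTri U) (hLU : M = L * U) :
    ∀ j : Fin n, |U j j| ≤ C + C ^ 2 / γ := by
  intro j
  have hMentry : ∀ a b, |M a b| ≤ C := fun a b => (entry_le_specNorm M a b).trans hM
  have hCγ : 0 ≤ C ^ 2 / γ := by positivity
  set m := j.val with hmdef
  have hmn : m < n := j.isLt
  by_cases hm0 : m = 0
  · -- base case: U j j = M j j
    have hbase : M j j = U j j := by
      rw [hLU, Matrix.mul_apply, Finset.sum_eq_single j]
      · rw [hLdiag, one_mul]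
      · intro k _ hk
        rcases lt_or_gt_of_ne hk with hlt | hgt
        · exact absurd hlt (by rw [Fin.lt_def]; omega)
        · rw [hL j k hgt, zero_mul]
      · intro h; exact absurd (Finset.mem_univ j) h
    rw [← hbase]
    calc |M j j| ≤ C := hMentry j j
      _ ≤ C + C ^ 2 / γ := le_add_of_nonneg_right hCγ
  · have hm1 : 1 ≤ m := Nat.one_le_iff_ne_zero.mpr hm0
    have hm1n : m + 1 ≤ n := hmn
    have hmn' : m ≤ n := le_of_lt hmn
    set A := psub M (m+1) hm1n with hAdef
    set L' := psub L (m+1) hm1n with hL'def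
    set U' := psub U (m+1) hm1n with hU'def
    have hcast : Fin.castLE hm1n (Fin.last m) = j := by
      apply Fin.ext; simp [hmdef]
    have hA : A = L' * U' := by
      ext a b
      show M (Fin.castLE hm1n a) (Fin.castLE hm1n b) = (L' * U') a b
      rw [hLU, Matrix.mul_apply, Matrix.mul_apply]
      exact sum_castLE hm1n (fun k => L (Fin.castLE hm1n a) k * U k (Fin.castLE hm1n b))
        (fun k hk => by
          have hz : L (Fin.castLE hm1n a) k = 0 :=
            hL _ _ (by rw [Fin.lt_def, Fin.coe_castLE]; exact lt_of_lt_of_le a.isLt hk)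
          show L (Fin.castLE hm1n a) k * U k (Fin.castLE hm1n b) = 0
          rw [hz, zero_mul])
    have hL'tri : ∀ i k : Fin (m+1), i < k → L' i k = 0 := fun i k hik =>
      hL _ _ (by rw [Fin.lt_def, Fin.coe_castLE, Fin.coe_castLE]; exact hik)
    have hL'diag : ∀ i, L' i i = 1 := fun i => hLdiag _
    have hdet : L'.det = 1 := by
      rw [Matrix.det_of_lowerTriangular L' (fun i k hik => hL'tri i k hik)]
      simp [hL'diag]
    have hunitL : IsUnit L'.det := by rw [hdet]; exact isUnit_one
    have hinvL : L'⁻¹ * L' = 1 := Matrix.nonsing_inv_mul _ hunitL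
    set x' : Fin (m+1) → ℝ := fun i => L'⁻¹ (Fin.last m) i with hx'def
    have hx'last : x' (Fin.last m) = 1 := by
      have h1 := congrFun (congrFun hinvL (Fin.last m)) (Fin.last m)
      rw [Matrix.mul_apply, Finset.sum_eq_single (Fin.last m)] at h1
      · simpa [hL'diag, Matrix.one_apply] using h1
      · intro k _ hk
        rw [hL'tri k (Fin.last m) (lt_of_le_of_ne (Fin.le_last k) hk), mul_zero]
      · intro h; exact absurd (Finset.mem_univ _) h
    have hrow : ∀ k, ∑ i, x' i * A i k = U' (Fin.last m) k := by
      intro k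
      have h1 : (L'⁻¹ * A) (Fin.last m) k = U' (Fin.last m) k := by
        rw [hA, ← Matrix.mul_assoc, hinvL, Matrix.one_mul]
      rw [← h1, Matrix.mul_apply]
    set B := psub M m hmn' with hBdef
    obtain ⟨hBunit, hBnorm⟩ := hinv m hmn' hm1
    have hBinv : B * B⁻¹ = 1 :=
      Matrix.mul_nonsing_inv _ ((Matrix.isUnit_iff_isUnit_det _).mp hBunit)
    set v : Fin m → ℝ := fun i => x' (Fin.castSucc i) with hvdef
    set r : Fin m → ℝ := fun k => M j (Fin.castLE hmn' k) with hrdef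
    set c : Fin m → ℝ := fun i => M (Fin.castLE hmn' i) j with hcdef
    have hAB : ∀ i k : Fin m, A (Fin.castSucc i) (Fin.castSucc k) = B i k := by
      intro i k; rfl
    have hAr : ∀ k : Fin m, A (Fin.last m) (Fin.castSucc k) = r k := by
      intro k
      show M (Fin.castLE hm1n (Fin.last m)) _ = _
      rw [hcast]; rfl
    have hAc : ∀ i : Fin m, A (Fin.castSucc i) (Fin.last m) = c i := by
      intro i
      show M _ (Fin.castLE hm1n (Fin.last m)) = _
      rw [hcast]; rfl
    have hAll : A (Fin.last m) (Fin.last m) = M j j := by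
      show M (Fin.castLE hm1n (Fin.last m)) (Fin.castLE hm1n (Fin.last m)) = _
      rw [hcast]
    have hvB : v ᵥ* B = -r := by
      funext k
      have h0 := hrow (Fin.castSucc k)
      have hU'0 : U' (Fin.last m) (Fin.castSucc k) = 0 :=
        hU _ _ (by
          rw [Fin.lt_def, Fin.coe_castLE, Fin.coe_castLE, Fin.coe_castSucc, Fin.val_last]
          exact k.isLt)
      rw [hU'0, Fin.sum_univ_castSucc] at h0
      simp only [hAB, hAr, hx'last, one_mul] at h0
      show ∑ i, x' (Fin.castSucc i) * B i k = -(r k)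
      linarith [h0]
    have hv : v = -(r ᵥ* B⁻¹) := by
      calc v = (v ᵥ* B) ᵥ* B⁻¹ := by
            rw [Matrix.vecMul_vecMul, hBinv, Matrix.vecMul_one]
        _ = -(r ᵥ* B⁻¹) := by rw [hvB, Matrix.neg_vecMul]
    set w : Fin m → ℝ := B⁻¹ *ᵥ c with hwdef
    have hUjj : U j j = M j j - r ⬝ᵥ w := by
      have h0 := hrow (Fin.last m)
      rw [Fin.sum_univ_castSucc] at h0
      simp only [hAc, hAll, hx'last, one_mul] at h0
      have hU'll : U' (Fin.last m) (Fin.last m) = U j j := by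
        show U (Fin.castLE hm1n (Fin.last m)) (Fin.castLE hm1n (Fin.last m)) = _
        rw [hcast]
      rw [hU'll] at h0
      have hdot : ∑ i, v i * c i = -(r ⬝ᵥ w) := by
        have : ∑ i, v i * c i = v ⬝ᵥ c := rfl
        rw [this, hv, neg_dotProduct, Matrix.dotProduct_mulVec]
      rw [hdot] at h0
      linarith [h0]
    -- bounds
    have hQc : Qn c ≤ C := by
      have h1 : Qn c ≤ Qn (fun i => M i j) := by
        apply Real.sqrt_le_sqrt
        exact sum_castLE_le hmn' (fun i => (M i j) ^ 2) (fun i => sq_nonneg _)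
      have h2 : Qn (fun i => M i j) ≤ specNorm M := by
        have h3 := Qn_mulVec_le M (Pi.single j 1)
        rw [Qn_single, mul_one] at h3
        rw [Matrix.mulVec_single_one] at h3
        exact h3
      exact h1.trans (h2.trans hM)
    have hQw : Qn w ≤ C / γ := by
      have h1 := Qn_mulVec_le B⁻¹ c
      have h2 : specNorm B⁻¹ * Qn c ≤ (1/γ) * C :=
        mul_le_mul hBnorm hQc (Qn_nonneg c) (by positivity)
      calc Qn w ≤ specNorm B⁻¹ * Qn c := h1
        _ ≤ (1/γ) * C := h2
        _ = C / γ := by ring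
    have hrw : |r ⬝ᵥ w| ≤ C * (C / γ) := by
      set wt : Fin n → ℝ := fun k => if hk : k.val < m then w ⟨k.val, hk⟩ else 0 with hwt
      have hwtc : ∀ k : Fin m, wt (Fin.castLE hmn' k) = w k := by
        intro k; simp [hwt, k.isLt]
      have h1 : r ⬝ᵥ w = (M *ᵥ wt) j := by
        show ∑ k, r k * w k = ∑ k, M j k * wt k
        rw [sum_castLE hmn' (fun k => M j k * wt k)
          (fun k hk => by simp [hwt, Nat.not_lt_of_le hk])]
        exact Finset.sum_congr rfl fun k _ => by rw [hwtc]
      have h2 : Qn wt = Qn w := by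
        unfold Qn
        congr 1
        rw [sum_castLE hmn' (fun k => wt k ^ 2)
          (fun k hk => by simp [hwt, Nat.not_lt_of_le hk])]
        exact Finset.sum_congr rfl fun k _ => by rw [hwtc]
      have h3 := (abs_le_Qn (M *ᵥ wt) j).trans (Qn_mulVec_le M wt)
      rw [h1]
      calc |(M *ᵥ wt) j| ≤ specNorm M * Qn wt := h3
        _ = specNorm M * Qn w := by rw [h2]
        _ ≤ C * (C / γ) := mul_le_mul hM hQw (Qn_nonneg w) hC.le
    have : |U j j| ≤ C + C * (C / γ) := by
      rw [hUjj]
      calc |M j j - r ⬝ᵥ w| ≤ |M j j| + |r ⬝ᵥ w| := abs_sub _ _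
        _ ≤ C + C * (C / γ) := add_le_add (hMentry j j) hrw
    calc |U j j| ≤ C + C * (C / γ) := this
      _ = C + C ^ 2 / γ := by ring
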